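/- Let M ≥ 1 be an integer, α a real with 0 < α < 1, t₁, t₂ ≥ 0 reals, n₁, n₂ ≥ M+1 integers, and x₁, x₂ ∈ ℤ. Assume either n₁ ≥ n₂, or (n₁ ≤ n₂ and t₁ ≥ t₂), and let 𝟙 := 1 if n₁ ≤ n₂, t₁ ≥ t₂ and (n₁,t₁) ≠ (n₂,t₂), and 𝟙 := 0 otherwise. Then −𝟙·φ(x₁,x₂) + ∑_{k=M+1}^{n₂} Ψ^{n₁,t₁}_{n₁-k}(x₁)·Φ^{n₂,t₂}_{n₂-k}(x₂) = −𝟙·φ̂(x₁,x₂) + (1/(2πi))² ∮ dv ∮ (dw/w) e^{t₁w}(w(w−1))^{n₁−M} w^{−(x₁+2n₁−2M)} · (1+v)^{x₂+2n₂−2M} e^{−t₂(v+1)}(v(v+1))^{−(n₂−M)} · (1+2v)/((w+v)(w−v−1)), where in the double integral the v-contour encloses exactly 0 and, for each v, the w-contour encloses exactly 0 and −v (in particular it does not enclose the pole w = v+1). -/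

import Mathlib

open Complex Real MeasureTheory
open scoped Classical

noncomputable section

/-- `Ψ^{n,t}_{n-j}(x)` for `j ≥ M+1` (used for all `j = M+1,…,n₂`, including `j > n`):
contour is the circle `|w| = 2` (the value is independent of the radius `R > 1`, and the
circle encloses the pole at `w = 1` appearing when `j > n`). -/
def Psi (M : ℕ) (n j : ℕ) (t : ℝ) (x : ℤ) : ℂ :=
  (2 * (π : ℂ) * I)⁻¹ * ∮ w in C((0 : ℂ), 2),
    w⁻¹ * (w * (w - 1)) ^ ((n : ℤ) - (j : ℤ)) * Complex.exp ((t : ℂ) * w) *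
      w ^ (-(x + 2 * (n : ℤ) - 2 * (M : ℤ)))

/-- `Φ^{n,t}_{n-j}(x)` for `j ≥ M+1`: single integral over a circle of radius `r`
around `0` (enclosing exactly `0`). -/
def Phi (M : ℕ) (n j : ℕ) (t : ℝ) (r : ℝ) (x : ℤ) : ℂ :=
  (2 * (π : ℂ) * I)⁻¹ * ∮ v in C((0 : ℂ), r),
    (1 + 2 * v) * (1 + v) ^ (x + 2 * (n : ℤ) - 2 * (M : ℤ)) *
      Complex.exp (-((t : ℂ) * (v + 1))) * (v * (1 + v)) ^ (-((n : ℤ) - (j : ℤ) + 1))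

/-- `φ(x₁,x₂)`: integral over the circle `|w| = 2` (any radius `R > 1`). -/
def phi (n₁ n₂ : ℕ) (t₁ t₂ : ℝ) (x₁ x₂ : ℤ) : ℂ :=
  (2 * (π : ℂ) * I)⁻¹ * ∮ w in C((0 : ℂ), 2),
    w⁻¹ * Complex.exp (((t₁ - t₂ : ℝ) : ℂ) * w) *
      w ^ (-(x₁ + (n₁ : ℤ) - x₂ - (n₂ : ℤ))) * (w - 1) ^ ((n₁ : ℤ) - (n₂ : ℤ))

/-- `φ̂(x₁,x₂)`: integral over a circle of radius `r` around `0` (enclosing exactly `0`). -/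
def phiHat (n₁ n₂ : ℕ) (t₁ t₂ : ℝ) (x₁ x₂ : ℤ) (r : ℝ) : ℂ :=
  (2 * (π : ℂ) * I)⁻¹ * ∮ w in C((0 : ℂ), r),
    w⁻¹ * Complex.exp (((t₁ - t₂ : ℝ) : ℂ) * w) * (w * (w - 1)) ^ ((n₁ : ℤ) - (n₂ : ℤ)) *
      w ^ (-(x₁ + 2 * (n₁ : ℤ) - x₂ - 2 * (n₂ : ℤ)))

/-- Integrand of the double contour integral on the right-hand side. -/
def K1Int (M : ℕ) (n₁ n₂ : ℕ) (t₁ t₂ : ℝ) (x₁ x₂ : ℤ) (v w : ℂ) : ℂ :=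
  w⁻¹ * Complex.exp ((t₁ : ℂ) * w) * (w * (w - 1)) ^ ((n₁ : ℤ) - (M : ℤ)) *
    w ^ (-(x₁ + 2 * (n₁ : ℤ) - 2 * (M : ℤ))) *
    (1 + v) ^ (x₂ + 2 * (n₂ : ℤ) - 2 * (M : ℤ)) * Complex.exp (-((t₂ : ℂ) * (v + 1))) *
    (v * (v + 1)) ^ (-((n₂ : ℤ) - (M : ℤ))) * (1 + 2 * v) / ((w + v) * (w - v - 1))

namespace K1Aux
open Metric Set


lemma tpi_ne : (2 * (π : ℂ) * I) ≠ 0 := by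
  simp [Real.pi_ne_zero, I_ne_zero]

lemma mem_compl_ne {z : ℂ} (h : z ≠ 0) : z ∈ ({(0 : ℂ)}ᶜ : Set ℂ) :=
  Set.mem_compl_singleton_iff.2 h

lemma ci_congr {f g : ℂ → ℂ} {c : ℂ} {R : ℝ} (hR : 0 ≤ R) (h : EqOn f g (sphere c R))
    (hf : CircleIntegrable f c R) : CircleIntegrable g c R := by
  have he : (fun θ : ℝ => f (circleMap c R θ)) = fun θ => g (circleMap c R θ) :=
    funext fun θ => h (circleMap_mem_sphere c hR θ)
  unfold CircleIntegrable at hf ⊢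
  rwa [he] at hf

lemma integral_finsum {ι : Type*} (s : Finset ι) (f : ι → ℂ → ℂ) (c : ℂ) (R : ℝ)
    (h : ∀ i ∈ s, CircleIntegrable (f i) c R) :
    (∮ z in C(c, R), ∑ i ∈ s, f i z) = ∑ i ∈ s, ∮ z in C(c, R), f i z := by
  simp only [circleIntegral, Finset.smul_sum]
  exact intervalIntegral.integral_finset_sum fun i hi => (h i hi).out

lemma integral_add' {f g : ℂ → ℂ} {c : ℂ} {R : ℝ} (hf : CircleIntegrable f c R)
    (hg : CircleIntegrable g c R) :
    (∮ z in C(c, R), f z + g z) = (∮ z in C(c, R), f z) + ∮ z in C(c, R), g z := by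
  simp only [circleIntegral, smul_add]
  exact intervalIntegral.integral_add hf.out hg.out

lemma diff_pole {u z : ℂ} (hz : z ≠ u) : DifferentiableAt ℂ (fun w => (w - u)⁻¹) z :=
  (differentiableAt_id.sub_const u).inv (sub_ne_zero.2 hz)

lemma KG {N : ℂ → ℂ} (hN : DifferentiableOn ℂ N {(0 : ℂ)}ᶜ) {u c : ℂ} {r : ℝ} (hr : 0 ≤ r)
    (h0 : (0 : ℂ) ∉ closedBall c r) (hu : u ∉ closedBall c r) :
    (∮ w in C(c, r), N w * (w - u)⁻¹) = 0 := by
  refine Complex.circleIntegral_eq_zero_of_differentiable_on_off_countable hr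
    Set.countable_empty ?_ ?_
  · refine ContinuousOn.mul (hN.continuousOn.mono ?_) ?_
    · intro z hz
      exact mem_compl_ne (fun h => h0 (h ▸ hz))
    · exact ContinuousOn.inv₀ (continuousOn_id.sub continuousOn_const)
        (fun z hz => sub_ne_zero.2 (fun h => hu (h ▸ hz)))
  · intro z hz
    have hzb : z ∈ ball c r := hz.1
    have hz0 : z ≠ 0 := fun h => h0 (h ▸ ball_subset_closedBall hzb)
    have hzu : z ≠ u := fun h => hu (h ▸ ball_subset_closedBall hzb)
    exact (hN.differentiableAt (isOpen_compl_singleton.mem_nhds (mem_compl_ne hz0))).mul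
      (diff_pole hzu)

lemma KC {N : ℂ → ℂ} (hN : DifferentiableOn ℂ N {(0 : ℂ)}ᶜ) {u : ℂ} {r : ℝ}
    (hr : 0 < r) (h0 : r < ‖u‖) :
    (∮ w in C(u, r), N w * (w - u)⁻¹) = 2 * (π : ℂ) * I * N u := by
  have hsub : closedBall u r ⊆ {(0 : ℂ)}ᶜ := by
    intro z hz
    refine mem_compl_ne (fun h => ?_)
    subst h
    have := mem_closedBall.1 hz
    rw [dist_zero_left] at this
    linarith
  have H := Complex.two_pi_I_inv_smul_circleIntegral_sub_inv_smul_of_differentiable_on_off_countable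
    (s := ∅) Set.countable_empty (mem_ball_self hr) (hN.continuousOn.mono hsub)
    (fun z hz => hN.differentiableAt
      (isOpen_compl_singleton.mem_nhds (hsub (ball_subset_closedBall hz.1))))
  have h1 : (∮ w in C(u, r), N w * (w - u)⁻¹) = ∮ w in C(u, r), (w - u)⁻¹ • N w :=
    circleIntegral.integral_congr hr.le (fun z _ => by rw [smul_eq_mul, mul_comm])
  rw [h1, ← H, smul_eq_mul]
  exact (mul_inv_cancel_left₀ tpi_ne _).symm

lemma KL {N : ℂ → ℂ} (hN : DifferentiableOn ℂ N {(0 : ℂ)}ᶜ) {u : ℂ} {r : ℝ}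
    (hr : 0 < r) (hru : r < ‖u‖) (hu2 : ‖u‖ < 2) :
    (∮ w in C((0 : ℂ), 2), N w * (w - u)⁻¹) =
      (∮ w in C((0 : ℂ), r), N w * (w - u)⁻¹) + 2 * (π : ℂ) * I * N u := by
  have hu0 : u ≠ 0 := by
    intro h
    rw [h, norm_zero] at hru
    linarith
  have hds : DifferentiableOn ℂ (dslope N u) {(0 : ℂ)}ᶜ :=
    (Complex.differentiableOn_dslope (isOpen_compl_singleton.mem_nhds (mem_compl_ne hu0))).2 hN
  have hkey : ∀ z : ℂ, z ≠ u → N z * (z - u)⁻¹ = dslope N u z + N u * (z - u)⁻¹ := by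
    intro z hz
    have hd : dslope N u z = (z - u)⁻¹ * (N z - N u) := by
      rw [dslope_of_ne _ hz, slope_def_field]
      field_simp [sub_ne_zero.2 hz]
    rw [hd]
    field_simp [sub_ne_zero.2 hz]
    ring
  have hann : (∮ w in C((0 : ℂ), 2), dslope N u w) = ∮ w in C((0 : ℂ), r), dslope N u w := by
    refine Complex.circleIntegral_eq_of_differentiable_on_annulus_off_countable hr
      (by linarith) Set.countable_empty (hds.continuousOn.mono ?_) ?_
    · intro z hz
      refine mem_compl_ne (fun h => ?_)
      subst h
      exact hz.2 (mem_ball_self hr)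
    · intro z hz
      have hz0 : z ≠ 0 := by
        intro h
        subst h
        exact hz.1.2 (mem_closedBall_self hr.le)
      exact hds.differentiableAt (isOpen_compl_singleton.mem_nhds (mem_compl_ne hz0))
  have hbig : (∮ w in C((0 : ℂ), 2), (w - u)⁻¹) = 2 * (π : ℂ) * I :=
    circleIntegral.integral_sub_inv_of_mem_ball (by simpa [mem_ball_zero_iff] using hu2)
  have hsmall : (∮ w in C((0 : ℂ), r), (w - u)⁻¹) = 0 := by
    refine Complex.circleIntegral_eq_zero_of_differentiable_on_off_countable hr.le
      Set.countable_empty ?_ ?_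
    · refine ContinuousOn.inv₀ (continuousOn_id.sub continuousOn_const) (fun z hz => ?_)
      refine sub_ne_zero.2 (fun h => ?_)
      rw [h] at hz
      rw [mem_closedBall, dist_zero_right] at hz
      linarith
    · intro z hz
      obtain ⟨hzb, -⟩ := hz
      refine diff_pole (fun h => ?_)
      rw [h] at hzb
      rw [mem_ball, dist_zero_right] at hzb
      linarith
  have hne2 : ∀ z ∈ sphere (0 : ℂ) 2, z ≠ u := by
    intro z hz h
    rw [mem_sphere_zero_iff_norm] at hz
    rw [h] at hz
    linarith
  have hner : ∀ z ∈ sphere (0 : ℂ) r, z ≠ u := by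
    intro z hz h
    rw [mem_sphere_zero_iff_norm] at hz
    rw [h] at hz
    linarith
  have hi2 : CircleIntegrable (dslope N u) 0 2 := by
    refine ContinuousOn.circleIntegrable (by norm_num) (hds.continuousOn.mono ?_)
    intro z hz
    rw [mem_sphere_zero_iff_norm] at hz
    refine mem_compl_ne (fun h => ?_)
    rw [h, norm_zero] at hz
    norm_num at hz
  have hir : CircleIntegrable (dslope N u) 0 r := by
    refine ContinuousOn.circleIntegrable hr.le (hds.continuousOn.mono ?_)
    intro z hz
    rw [mem_sphere_zero_iff_norm] at hz
    refine mem_compl_ne (fun h => ?_)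
    rw [h, norm_zero] at hz
    linarith
  have hpi2 : CircleIntegrable (fun w => N u * (w - u)⁻¹) 0 2 := by
    refine ContinuousOn.circleIntegrable (by norm_num) ?_
    exact continuousOn_const.mul (ContinuousOn.inv₀ (continuousOn_id.sub continuousOn_const)
      (fun z hz => sub_ne_zero.2 (hne2 z hz)))
  have hpir : CircleIntegrable (fun w => N u * (w - u)⁻¹) 0 r := by
    refine ContinuousOn.circleIntegrable hr.le ?_
    exact continuousOn_const.mul (ContinuousOn.inv₀ (continuousOn_id.sub continuousOn_const)
      (fun z hz => sub_ne_zero.2 (hner z hz)))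
  have e2 : (∮ w in C((0 : ℂ), 2), N w * (w - u)⁻¹) =
      (∮ w in C((0 : ℂ), 2), dslope N u w) + N u * (2 * (π : ℂ) * I) := by
    rw [circleIntegral.integral_congr (by norm_num : (0:ℝ) ≤ 2)
      (fun z hz => hkey z (hne2 z hz)), integral_add' hi2 hpi2,
      circleIntegral.integral_const_mul, hbig]
  have er : (∮ w in C((0 : ℂ), r), N w * (w - u)⁻¹) =
      (∮ w in C((0 : ℂ), r), dslope N u w) := by
    rw [circleIntegral.integral_congr hr.le (fun z hz => hkey z (hner z hz)),
      integral_add' hir hpir, circleIntegral.integral_const_mul, hsmall, mul_zero,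
      add_zero]
  rw [e2, er, hann]
  ring



lemma NE_diff (t : ℝ) (m p : ℤ) (hp : 0 ≤ p) :
    DifferentiableOn ℂ (fun w : ℂ => Complex.exp ((t : ℂ) * w) * w ^ m * (w - 1) ^ p)
      {(0 : ℂ)}ᶜ := by
  intro z hz
  have hz0 : z ≠ 0 := Set.mem_compl_singleton_iff.1 hz
  exact ((((differentiableAt_id.const_mul ((t : ℂ))).cexp.mul
    (differentiableAt_zpow.2 (Or.inl hz0))).mul
    ((differentiableAt_id.sub_const 1).zpow (Or.inr hp)))).differentiableWithinAt

lemma sphere_ne_of_norm {c z : ℂ} {R : ℝ} (hz : z ∈ sphere c R) {u : ℂ} (h : ‖u - c‖ ≠ R) :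
    z ≠ u := by
  intro he
  rw [mem_sphere_iff_norm] at hz
  exact h (he ▸ hz)

lemma twoPole (B : ℕ) : ∀ (g : ℂ → ℂ), DifferentiableOn ℂ g {(0 : ℂ)}ᶜ →
    ∀ {r s : ℝ}, 0 < r → r < 1 → 0 < s → s < 1 / 2 →
    (∮ w in C((0 : ℂ), 2), g w * (w - 1) ^ (-(B : ℤ))) =
      (∮ w in C((0 : ℂ), r), g w * (w - 1) ^ (-(B : ℤ))) +
        ∮ w in C((1 : ℂ), s), g w * (w - 1) ^ (-(B : ℤ)) := by
  induction B with
  | zero =>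
    intro g hg r s hr hr1 hs hs2
    simp only [Nat.cast_zero, neg_zero, zpow_zero, mul_one]
    have h1 : (∮ w in C((0 : ℂ), 2), g w) = ∮ w in C((0 : ℂ), r), g w := by
      refine Complex.circleIntegral_eq_of_differentiable_on_annulus_off_countable hr
        (by linarith) Set.countable_empty (hg.continuousOn.mono ?_) ?_
      · intro z hz
        refine mem_compl_ne (fun h => ?_)
        exact hz.2 (h ▸ mem_ball_self hr)
      · intro z hz
        have hz0 : z ≠ 0 := fun h => hz.1.2 (h ▸ mem_closedBall_self hr.le)
        exact hg.differentiableAt (isOpen_compl_singleton.mem_nhds (mem_compl_ne hz0))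
    have h2 : (∮ w in C((1 : ℂ), s), g w) = 0 := by
      have hsub : closedBall (1 : ℂ) s ⊆ {(0 : ℂ)}ᶜ := by
        intro z hz
        refine mem_compl_ne (fun h => ?_)
        rw [h, mem_closedBall, dist_zero_left, norm_one] at hz
        linarith
      refine Complex.circleIntegral_eq_zero_of_differentiable_on_off_countable hs.le
        Set.countable_empty (hg.continuousOn.mono hsub) ?_
      intro z hz
      exact hg.differentiableAt
        (isOpen_compl_singleton.mem_nhds (hsub (ball_subset_closedBall hz.1)))
    rw [h1, h2, add_zero]
  | succ B ih =>
    intro g hg r s hr hr1 hs hs2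
    have h10 : (1 : ℂ) ≠ 0 := one_ne_zero
    have hds : DifferentiableOn ℂ (dslope g 1) {(0 : ℂ)}ᶜ :=
      (Complex.differentiableOn_dslope (isOpen_compl_singleton.mem_nhds (mem_compl_ne h10))).2 hg
    have hkey : ∀ w : ℂ, w ≠ 1 → g w * (w - 1) ^ (-((B : ℤ) + 1)) =
        dslope g 1 w * (w - 1) ^ (-(B : ℤ)) + g 1 * (w - 1) ^ (-((B : ℤ) + 1)) := by
      intro w hw
      have hw1 : w - 1 ≠ 0 := sub_ne_zero.2 hw
      have hgw : g w = g 1 + (w - 1) * dslope g 1 w := by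
        have h := sub_smul_dslope g 1 w
        rw [smul_eq_mul] at h
        linear_combination -h
      rw [hgw]
      have hz : (w - 1) * (w - 1) ^ (-((B : ℤ) + 1)) = (w - 1) ^ (-(B : ℤ)) := by
        rw [show (-(B : ℤ)) = 1 + (-((B : ℤ) + 1)) by ring, zpow_add₀ hw1, zpow_one]
      calc (g 1 + (w - 1) * dslope g 1 w) * (w - 1) ^ (-((B : ℤ) + 1))
          = dslope g 1 w * ((w - 1) * (w - 1) ^ (-((B : ℤ) + 1))) +
            g 1 * (w - 1) ^ (-((B : ℤ) + 1)) := by ring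
        _ = _ := by rw [hz]
    have hs2' : ∀ z ∈ sphere (0 : ℂ) 2, z ≠ 1 := fun z hz =>
      sphere_ne_of_norm hz (by simp only [sub_zero, norm_one]; norm_num)
    have hsr1 : ∀ z ∈ sphere (0 : ℂ) r, z ≠ 1 := fun z hz =>
      sphere_ne_of_norm hz (by simp only [sub_zero, norm_one]; intro h; linarith)
    have hss1 : ∀ z ∈ sphere (1 : ℂ) s, z ≠ 1 := by
      intro z hz h
      rw [mem_sphere_iff_norm, h, sub_self, norm_zero] at hz
      linarith
    have hsr0 : ∀ z ∈ sphere (0 : ℂ) r, z ≠ 0 := by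
      intro z hz h
      rw [mem_sphere_zero_iff_norm, h, norm_zero] at hz
      linarith
    have hs20 : ∀ z ∈ sphere (0 : ℂ) 2, z ≠ 0 := by
      intro z hz h
      rw [mem_sphere_zero_iff_norm, h, norm_zero] at hz
      norm_num at hz
    have hss0 : ∀ z ∈ sphere (1 : ℂ) s, z ≠ 0 := by
      intro z hz h
      rw [mem_sphere_iff_norm, h, zero_sub, norm_neg, norm_one] at hz
      linarith
    have hcds : ContinuousOn (dslope g 1) {(0 : ℂ)}ᶜ := hds.continuousOn
    have hint : ∀ (c : ℂ) (R : ℝ), 0 ≤ R → (∀ z ∈ sphere c R, z ≠ 0) →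
        (∀ z ∈ sphere c R, z ≠ 1) →
        CircleIntegrable (fun w => dslope g 1 w * (w - 1) ^ (-(B : ℤ))) c R := by
      intro c R hR h0 h1'
      refine ContinuousOn.circleIntegrable hR ?_
      refine ContinuousOn.mul (hcds.mono (fun z hz => mem_compl_ne (h0 z hz))) ?_
      intro z hz
      exact ((continuousWithinAt_id.sub continuousWithinAt_const).zpow₀ _
        (Or.inl (sub_ne_zero.2 (h1' z hz))))
    have hint2 : ∀ (c : ℂ) (R : ℝ), 0 ≤ R → (∀ z ∈ sphere c R, z ≠ 1) →
        CircleIntegrable (fun w => g 1 * (w - 1) ^ (-((B : ℤ) + 1))) c R := by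
      intro c R hR h1'
      refine ContinuousOn.circleIntegrable hR ?_
      refine continuousOn_const.mul ?_
      intro z hz
      exact ((continuousWithinAt_id.sub continuousWithinAt_const).zpow₀ _
        (Or.inl (sub_ne_zero.2 (h1' z hz))))
    have hzero_r : (∮ w in C((0 : ℂ), r), (w - 1) ^ (-((B : ℤ) + 1))) = 0 := by
      refine Complex.circleIntegral_eq_zero_of_differentiable_on_off_countable hr.le
        Set.countable_empty ?_ ?_
      · intro z hz
        refine ContinuousWithinAt.zpow₀
          (continuousWithinAt_id.sub continuousWithinAt_const) _ (Or.inl ?_)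
        refine sub_ne_zero.2 (fun h => ?_)
        rw [id_eq] at h
        rw [h, mem_closedBall, dist_zero_right, norm_one] at hz
        linarith
      · intro z hz
        obtain ⟨hzb, -⟩ := hz
        refine DifferentiableAt.zpow (differentiableAt_id.sub_const 1) (Or.inl ?_)
        refine sub_ne_zero.2 (fun h => ?_)
        rw [h, mem_ball, dist_zero_right, norm_one] at hzb
        linarith
    have hpole : (∮ w in C((0 : ℂ), 2), (w - 1) ^ (-((B : ℤ) + 1))) =
        ∮ w in C((1 : ℂ), s), (w - 1) ^ (-((B : ℤ) + 1)) := by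
      rcases Nat.eq_zero_or_pos B with hB | hB
      · subst hB
        simp only [Nat.cast_zero, neg_zero, zero_add, zpow_neg, zpow_one]
        have e1 : (∮ w in C((0 : ℂ), 2), (w - 1)⁻¹) = 2 * (π : ℂ) * I :=
          circleIntegral.integral_sub_inv_of_mem_ball (by
            rw [mem_ball, dist_zero_right, norm_one]; norm_num)
        have e2 : (∮ w in C((1 : ℂ), s), (w - 1)⁻¹) = 2 * (π : ℂ) * I :=
          circleIntegral.integral_sub_inv_of_mem_ball (mem_ball_self hs)
        rw [e1, e2]
      · have hne : (-((B : ℤ) + 1)) ≠ -1 := by omega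
        rw [circleIntegral.integral_sub_zpow_of_ne hne,
          circleIntegral.integral_sub_zpow_of_ne hne]
    have hcast : ((B + 1 : ℕ) : ℤ) = (B : ℤ) + 1 := by push_cast; ring
    have goal2 : (∮ w in C((0 : ℂ), 2), g w * (w - 1) ^ (-((B : ℤ) + 1))) =
        (∮ w in C((0 : ℂ), r), g w * (w - 1) ^ (-((B : ℤ) + 1))) +
          ∮ w in C((1 : ℂ), s), g w * (w - 1) ^ (-((B : ℤ) + 1)) := by
      have e2 := circleIntegral.integral_congr (by norm_num : (0:ℝ) ≤ 2)
        (fun z hz => hkey z (hs2' z hz))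
      have er := circleIntegral.integral_congr hr.le (fun z hz => hkey z (hsr1 z hz))
      have es := circleIntegral.integral_congr hs.le (fun z hz => hkey z (hss1 z hz))
      rw [e2, er, es,
        integral_add' (hint 0 2 (by norm_num) hs20 hs2') (hint2 0 2 (by norm_num) hs2'),
        integral_add' (hint 0 r hr.le hsr0 hsr1) (hint2 0 r hr.le hsr1),
        integral_add' (hint 1 s hs.le hss0 hss1) (hint2 1 s hs.le hss1),
        circleIntegral.integral_const_mul, circleIntegral.integral_const_mul,
        circleIntegral.integral_const_mul, hzero_r, hpole,
        ih (dslope g 1) hds hr hr1 hs hs2]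
      ring
    rw [show (-((B + 1 : ℕ) : ℤ)) = -((B : ℤ) + 1) by rw [hcast]]
    exact goal2

lemma translate (f : ℂ → ℂ) (c : ℂ) (R : ℝ) :
    (∮ w in C(c, R), f w) = ∮ z in C((0 : ℂ), R), f (c + z) := by
  simp only [circleIntegral, deriv_circleMap]
  refine intervalIntegral.integral_congr fun θ _ => ?_
  congr 1
  rw [← circleMap_sub_center c R θ]
  ring

lemma telescope (X Y : ℂ) (hX : X ≠ 0) (hY : Y ≠ 0) (hXY : X ≠ Y) (M n₂ : ℕ) (n₁ : ℤ)
    (h : M + 1 ≤ n₂) :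
    ∑ k ∈ Finset.Icc (M + 1) n₂, X ^ (n₁ - (k : ℤ)) * Y ^ (-((n₂ : ℤ) - (k : ℤ) + 1)) =
      (X ^ (n₁ - (M : ℤ)) * Y ^ (-((n₂ : ℤ) - (M : ℤ))) - X ^ (n₁ - (n₂ : ℤ))) / (X - Y) := by
  rw [eq_div_iff (sub_ne_zero.2 hXY), Finset.sum_mul]
  set u : ℕ → ℂ := fun j => X ^ (n₁ - (j : ℤ) + 1) * Y ^ ((j : ℤ) - (n₂ : ℤ) - 1) with hu
  have hterm : ∀ k : ℕ, X ^ (n₁ - (k : ℤ)) * Y ^ (-((n₂ : ℤ) - (k : ℤ) + 1)) * (X - Y) =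
      u k - u (k + 1) := by
    intro k
    have e1 : X ^ (n₁ - (k : ℤ)) * X = X ^ (n₁ - (k : ℤ) + 1) := (zpow_add_one₀ hX _).symm
    have e2 : Y ^ (-((n₂ : ℤ) - (k : ℤ) + 1)) * Y = Y ^ ((k : ℤ) - (n₂ : ℤ)) := by
      rw [← zpow_add_one₀ hY]
      congr 1
      ring
    have e3 : u (k + 1) = X ^ (n₁ - (k : ℤ)) * Y ^ ((k : ℤ) - (n₂ : ℤ)) := by
      rw [hu]
      push_cast
      rw [show n₁ - ((k : ℤ) + 1) + 1 = n₁ - (k : ℤ) by ring,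
        show (k : ℤ) + 1 - (n₂ : ℤ) - 1 = (k : ℤ) - (n₂ : ℤ) by ring]
    have e4 : u k = X ^ (n₁ - (k : ℤ) + 1) * Y ^ (-((n₂ : ℤ) - (k : ℤ) + 1)) := by
      rw [hu]
      congr 1
      congr 1
      ring
    rw [mul_sub, e3, e4]
    calc X ^ (n₁ - (k : ℤ)) * Y ^ (-((n₂ : ℤ) - (k : ℤ) + 1)) * X -
          X ^ (n₁ - (k : ℤ)) * Y ^ (-((n₂ : ℤ) - (k : ℤ) + 1)) * Y
        = (X ^ (n₁ - (k : ℤ)) * X) * Y ^ (-((n₂ : ℤ) - (k : ℤ) + 1)) -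
          X ^ (n₁ - (k : ℤ)) * (Y ^ (-((n₂ : ℤ) - (k : ℤ) + 1)) * Y) := by ring
      _ = _ := by rw [e1, e2]
  rw [Finset.sum_congr rfl (fun k _ => hterm k)]
  rw [← Finset.Ico_add_one_right_eq_Icc, Finset.sum_Ico_eq_sum_range]
  have hN : n₂ + 1 - (M + 1) = n₂ - M := by omega
  rw [hN]
  have tel : ∑ i ∈ Finset.range (n₂ - M), (u (M + 1 + i) - u (M + 1 + (i + 1))) =
      u (M + 1 + 0) - u (M + 1 + (n₂ - M)) :=
    Finset.sum_range_sub' (fun i => u (M + 1 + i)) (n₂ - M)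
  simp only [← Nat.add_assoc, Nat.add_zero] at tel
  rw [tel]
  have eM : u (M + 1) = X ^ (n₁ - (M : ℤ)) * Y ^ (-((n₂ : ℤ) - (M : ℤ))) := by
    rw [hu]
    push_cast
    rw [show n₁ - ((M : ℤ) + 1) + 1 = n₁ - (M : ℤ) by ring,
      show (M : ℤ) + 1 - (n₂ : ℤ) - 1 = -((n₂ : ℤ) - (M : ℤ)) by ring]
  have eN : u (M + 1 + (n₂ - M)) = X ^ (n₁ - (n₂ : ℤ)) := by
    rw [show M + 1 + (n₂ - M) = n₂ + 1 by omega, hu]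
    push_cast
    rw [show n₁ - ((n₂ : ℤ) + 1) + 1 = n₁ - (n₂ : ℤ) by ring,
      show (n₂ : ℤ) + 1 - (n₂ : ℤ) - 1 = 0 by ring, zpow_zero, mul_one]
  rw [eM, eN]

/-! ### Specific functions for the proof -/

def NN (M n₁ : ℕ) (t₁ : ℝ) (x₁ : ℤ) (w : ℂ) : ℂ :=
  Complex.exp ((t₁ : ℂ) * w) *
    w ^ ((n₁ : ℤ) - (M : ℤ) - (x₁ + 2 * (n₁ : ℤ) - 2 * (M : ℤ)) - 1) *
    (w - 1) ^ ((n₁ : ℤ) - (M : ℤ))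

def CC (M n₂ : ℕ) (t₂ : ℝ) (x₂ : ℤ) (v : ℂ) : ℂ :=
  (1 + v) ^ (x₂ + 2 * (n₂ : ℤ) - 2 * (M : ℤ)) * Complex.exp (-((t₂ : ℂ) * (v + 1))) *
    (v * (v + 1)) ^ (-((n₂ : ℤ) - (M : ℤ)))

def BB (M n₁ n₂ : ℕ) (t₁ t₂ : ℝ) (x₁ x₂ : ℤ) (v w : ℂ) : ℂ :=
  Complex.exp ((t₁ : ℂ) * w) *
    w ^ ((n₁ : ℤ) - (n₂ : ℤ) - (x₁ + 2 * (n₁ : ℤ) - 2 * (M : ℤ)) - 1) *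
    (w - 1) ^ ((n₁ : ℤ) - (n₂ : ℤ)) * (1 + v) ^ (x₂ + 2 * (n₂ : ℤ) - 2 * (M : ℤ)) *
    Complex.exp (-((t₂ : ℂ) * (v + 1))) * ((w - (v + 1))⁻¹ - (w - (-v))⁻¹)

def RR (n₁ n₂ : ℕ) (t₁ t₂ : ℝ) (x₁ x₂ : ℤ) (v : ℂ) : ℂ :=
  Complex.exp (((t₁ - t₂ : ℝ) : ℂ) * (1 + v)) *
    (1 + v) ^ (-(x₁ + (n₁ : ℤ) - x₂ - (n₂ : ℤ)) - 1) * v ^ ((n₁ : ℤ) - (n₂ : ℤ))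

def FF (n₁ n₂ : ℕ) (t₁ t₂ : ℝ) (x₁ x₂ : ℤ) (w : ℂ) : ℂ :=
  Complex.exp (((t₁ - t₂ : ℝ) : ℂ) * w) *
    w ^ (-(x₁ + (n₁ : ℤ) - x₂ - (n₂ : ℤ)) - 1) * (w - 1) ^ ((n₁ : ℤ) - (n₂ : ℤ))

lemma NN_diff (M n₁ : ℕ) (t₁ : ℝ) (x₁ : ℤ) (h : M ≤ n₁) :
    DifferentiableOn ℂ (NN M n₁ t₁ x₁) {(0 : ℂ)}ᶜ :=
  NE_diff t₁ _ _ (by exact_mod_cast sub_nonneg.2 (Int.ofNat_le.2 h))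

lemma K1Int_split (M n₁ n₂ : ℕ) (t₁ t₂ : ℝ) (x₁ x₂ : ℤ) (v w : ℂ)
    (hw0 : w ≠ 0) (hwv : w + v ≠ 0) (hwv1 : w - v - 1 ≠ 0) :
    K1Int M n₁ n₂ t₁ t₂ x₁ x₂ v w =
      CC M n₂ t₂ x₂ v * (NN M n₁ t₁ x₁ w * (w - (v + 1))⁻¹) -
        CC M n₂ t₂ x₂ v * (NN M n₁ t₁ x₁ w * (w - (-v))⁻¹) := by
  unfold K1Int CC NN
  have hpow : w ^ ((n₁ : ℤ) - (M : ℤ) - (x₁ + 2 * (n₁ : ℤ) - 2 * (M : ℤ)) - 1) =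
      w ^ ((n₁ : ℤ) - (M : ℤ)) * w ^ (-(x₁ + 2 * (n₁ : ℤ) - 2 * (M : ℤ))) * w⁻¹ := by
    rw [show (n₁ : ℤ) - (M : ℤ) - (x₁ + 2 * (n₁ : ℤ) - 2 * (M : ℤ)) - 1 =
      ((n₁ : ℤ) - (M : ℤ)) + (-(x₁ + 2 * (n₁ : ℤ) - 2 * (M : ℤ))) + -1 by ring,
      zpow_add₀ hw0, zpow_add₀ hw0, zpow_neg_one]
  have hfrac : (1 + 2 * v) / ((w + v) * (w - v - 1)) = (w - (v + 1))⁻¹ - (w - (-v))⁻¹ := by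
    rw [div_eq_iff (mul_ne_zero hwv hwv1)]
    have h1 : w - (v + 1) ≠ 0 := by
      intro h; apply hwv1; rw [← h]; ring
    have h2 : w - (-v) ≠ 0 := by
      intro h; apply hwv; rw [← h]; ring
    field_simp
    ring
  rw [mul_zpow w (w - 1) ((n₁ : ℤ) - (M : ℤ)), hpow, mul_div_assoc, hfrac]
  ring

lemma CCNN_eq_RR (M n₁ n₂ : ℕ) (t₁ t₂ : ℝ) (x₁ x₂ : ℤ) (v : ℂ)
    (hv0 : v ≠ 0) (hv1 : (1 : ℂ) + v ≠ 0) :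
    CC M n₂ t₂ x₂ v * NN M n₁ t₁ x₁ (v + 1) = RR n₁ n₂ t₁ t₂ x₁ x₂ v := by
  unfold CC NN RR
  have hv1' : v + 1 ≠ 0 := by rwa [add_comm]
  rw [show (1 : ℂ) + v = v + 1 from add_comm 1 v]
  have hvv : v + 1 - 1 = v := by ring
  rw [hvv, mul_zpow v (v + 1) (-((n₂ : ℤ) - (M : ℤ)))]
  have he : Complex.exp (((t₁ - t₂ : ℝ) : ℂ) * (v + 1)) =
      Complex.exp (-((t₂ : ℂ) * (v + 1))) * Complex.exp ((t₁ : ℂ) * (v + 1)) := by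
    rw [← Complex.exp_add]
    congr 1
    push_cast
    ring
  have hp1 : (v + 1) ^ (-(x₁ + (n₁ : ℤ) - x₂ - (n₂ : ℤ)) - 1) =
      (v + 1) ^ (x₂ + 2 * (n₂ : ℤ) - 2 * (M : ℤ)) *
        (v + 1) ^ ((n₁ : ℤ) - (M : ℤ) - (x₁ + 2 * (n₁ : ℤ) - 2 * (M : ℤ)) - 1) *
        (v + 1) ^ (-((n₂ : ℤ) - (M : ℤ))) := by
    rw [← zpow_add₀ hv1', ← zpow_add₀ hv1']
    congr 1
    ring
  have hp2 : v ^ ((n₁ : ℤ) - (n₂ : ℤ)) = v ^ (-((n₂ : ℤ) - (M : ℤ))) * v ^ ((n₁ : ℤ) - (M : ℤ)) := by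
    rw [← zpow_add₀ hv0]
    congr 1
    ring
  rw [he, hp1, hp2]
  ring

lemma RR_eq_FF (n₁ n₂ : ℕ) (t₁ t₂ : ℝ) (x₁ x₂ : ℤ) (v : ℂ) :
    RR n₁ n₂ t₁ t₂ x₁ x₂ v = FF n₁ n₂ t₁ t₂ x₁ x₂ (1 + v) := by
  unfold RR FF
  rw [show (1 : ℂ) + v - 1 = v by ring]

lemma phi_int_eq_FF (n₁ n₂ : ℕ) (t₁ t₂ : ℝ) (x₁ x₂ : ℤ) (w : ℂ) (hw0 : w ≠ 0) :
    w⁻¹ * Complex.exp (((t₁ - t₂ : ℝ) : ℂ) * w) * w ^ (-(x₁ + (n₁ : ℤ) - x₂ - (n₂ : ℤ))) *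
      (w - 1) ^ ((n₁ : ℤ) - (n₂ : ℤ)) = FF n₁ n₂ t₁ t₂ x₁ x₂ w := by
  unfold FF
  rw [show -(x₁ + (n₁ : ℤ) - x₂ - (n₂ : ℤ)) - 1 =
    -(x₁ + (n₁ : ℤ) - x₂ - (n₂ : ℤ)) + -1 by ring, zpow_add₀ hw0, zpow_neg_one]
  ring

lemma phiHat_int_eq_FF (n₁ n₂ : ℕ) (t₁ t₂ : ℝ) (x₁ x₂ : ℤ) (w : ℂ) (hw0 : w ≠ 0) :
    w⁻¹ * Complex.exp (((t₁ - t₂ : ℝ) : ℂ) * w) *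
      (w * (w - 1)) ^ ((n₁ : ℤ) - (n₂ : ℤ)) * w ^ (-(x₁ + 2 * (n₁ : ℤ) - x₂ - 2 * (n₂ : ℤ))) =
      FF n₁ n₂ t₁ t₂ x₁ x₂ w := by
  unfold FF
  rw [mul_zpow w (w - 1) ((n₁ : ℤ) - (n₂ : ℤ)),
    show -(x₁ + (n₁ : ℤ) - x₂ - (n₂ : ℤ)) - 1 =
      ((n₁ : ℤ) - (n₂ : ℤ)) + (-(x₁ + 2 * (n₁ : ℤ) - x₂ - 2 * (n₂ : ℤ))) + -1 by ring,
    zpow_add₀ hw0, zpow_add₀ hw0, zpow_neg_one]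
  ring

lemma sumPsiPhi (M n₁ n₂ : ℕ) (t₁ t₂ : ℝ) (x₁ x₂ : ℤ) (h : M + 1 ≤ n₂) (v w : ℂ)
    (hv0 : v ≠ 0) (hv1 : (1 : ℂ) + v ≠ 0) (hw0 : w ≠ 0) (hw1 : w - 1 ≠ 0)
    (hwv : w + v ≠ 0) (hwv1 : w - v - 1 ≠ 0) :
    ∑ k ∈ Finset.Icc (M + 1) n₂,
      (w⁻¹ * (w * (w - 1)) ^ ((n₁ : ℤ) - (k : ℤ)) * Complex.exp ((t₁ : ℂ) * w) *
          w ^ (-(x₁ + 2 * (n₁ : ℤ) - 2 * (M : ℤ)))) *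
        ((1 + 2 * v) * (1 + v) ^ (x₂ + 2 * (n₂ : ℤ) - 2 * (M : ℤ)) *
          Complex.exp (-((t₂ : ℂ) * (v + 1))) * (v * (1 + v)) ^ (-((n₂ : ℤ) - (k : ℤ) + 1))) =
      K1Int M n₁ n₂ t₁ t₂ x₁ x₂ v w - BB M n₁ n₂ t₁ t₂ x₁ x₂ v w := by
  have hX : w * (w - 1) ≠ 0 := mul_ne_zero hw0 hw1
  have hY : v * (1 + v) ≠ 0 := mul_ne_zero hv0 hv1
  have hD : w * (w - 1) - v * (1 + v) = (w + v) * (w - v - 1) := by ring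
  have hDne : (w + v) * (w - v - 1) ≠ 0 := mul_ne_zero hwv hwv1
  have hXY : w * (w - 1) ≠ v * (1 + v) := by
    intro h'
    apply hDne
    rw [← hD, h', sub_self]
  have hsum := telescope (w * (w - 1)) (v * (1 + v)) hX hY hXY M n₂ (n₁ : ℤ) h
  have hterm : ∀ k ∈ Finset.Icc (M + 1) n₂,
      (w⁻¹ * (w * (w - 1)) ^ ((n₁ : ℤ) - (k : ℤ)) * Complex.exp ((t₁ : ℂ) * w) *
          w ^ (-(x₁ + 2 * (n₁ : ℤ) - 2 * (M : ℤ)))) *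
        ((1 + 2 * v) * (1 + v) ^ (x₂ + 2 * (n₂ : ℤ) - 2 * (M : ℤ)) *
          Complex.exp (-((t₂ : ℂ) * (v + 1))) * (v * (1 + v)) ^ (-((n₂ : ℤ) - (k : ℤ) + 1))) =
        (w⁻¹ * Complex.exp ((t₁ : ℂ) * w) * w ^ (-(x₁ + 2 * (n₁ : ℤ) - 2 * (M : ℤ))) *
          ((1 + 2 * v) * (1 + v) ^ (x₂ + 2 * (n₂ : ℤ) - 2 * (M : ℤ)) *
            Complex.exp (-((t₂ : ℂ) * (v + 1))))) *
          ((w * (w - 1)) ^ ((n₁ : ℤ) - (k : ℤ)) * (v * (1 + v)) ^ (-((n₂ : ℤ) - (k : ℤ) + 1))) :=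
    fun k _ => by ring
  rw [Finset.sum_congr rfl hterm, ← Finset.mul_sum, hsum, hD]
  unfold K1Int BB
  have h1 : w - (v + 1) ≠ 0 := by
    intro h'; apply hwv1; rw [← h']; ring
  have h2 : w - (-v) ≠ 0 := by
    intro h'; apply hwv; rw [← h']; ring
  have hfrac : (w - (v + 1))⁻¹ - (w - (-v))⁻¹ = (1 + 2 * v) / ((w + v) * (w - v - 1)) := by
    rw [eq_div_iff hDne]
    field_simp
    ring
  rw [hfrac]
  rw [show (v : ℂ) * (v + 1) = v * (1 + v) by ring]
  rw [mul_zpow w (w - 1) ((n₁ : ℤ) - (n₂ : ℤ)),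
    show (n₁ : ℤ) - (n₂ : ℤ) - (x₁ + 2 * (n₁ : ℤ) - 2 * (M : ℤ)) - 1 =
      ((n₁ : ℤ) - (n₂ : ℤ)) + (-(x₁ + 2 * (n₁ : ℤ) - 2 * (M : ℤ))) + -1 by ring,
    zpow_add₀ hw0, zpow_add₀ hw0, zpow_neg_one]
  rw [mul_zpow w (w - 1) ((n₁ : ℤ) - (M : ℤ))]
  field_simp
/-! ### Splitting of the `w`-contour -/

lemma norm_facts {rv rw : ℝ} (hrw : 0 < rw) (hrwv : rw < rv) (hrv : rv < 1 / 8)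
    {v : ℂ} (hv : ‖v‖ = rv) :
    v ≠ 0 ∧ (1 : ℂ) + v ≠ 0 ∧ 1 - rv ≤ ‖v + 1‖ ∧ ‖v + 1‖ ≤ 1 + rv ∧ 1 - 2 * rv ≤ ‖1 + 2 * v‖ := by
  have hrv0 : 0 < rv := hrw.trans hrwv
  refine ⟨?_, ?_, ?_, ?_, ?_⟩
  · intro h; rw [h, norm_zero] at hv; linarith
  · intro h
    have : v = -1 := by linear_combination h
    rw [this] at hv
    simp at hv
    linarith
  · have he : (v + 1) - v = 1 := by ring
    have h2 := norm_sub_le (v + 1) v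
    rw [he, norm_one, hv] at h2
    linarith
  · calc ‖v + 1‖ ≤ ‖v‖ + ‖(1 : ℂ)‖ := norm_add_le v 1
      _ = 1 + rv := by rw [norm_one, hv]; ring
  · have h1 : (1 : ℂ) = (1 + 2 * v) - 2 * v := by ring
    have h2 : ‖(1 : ℂ) + 2 * v - 2 * v‖ ≤ ‖(1 : ℂ) + 2 * v‖ + ‖2 * v‖ := norm_sub_le _ _
    have h3 : ‖(2 : ℂ) * v‖ = 2 * rv := by
      rw [norm_mul, hv]
      norm_num
    have h4 : ‖(1 : ℂ) + 2 * v - 2 * v‖ = 1 := by norm_num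
    linarith

lemma Wsplit (M n₁ n₂ : ℕ) (t₁ t₂ : ℝ) (x₁ x₂ : ℤ) (hMn₁ : M ≤ n₁)
    {rv rw : ℝ} (hrw : 0 < rw) (hrwv : rw < rv) (hrv : rv < 1 / 8)
    (v : ℂ) (hv : ‖v‖ = rv) :
    (∮ w in C((0 : ℂ), 2), K1Int M n₁ n₂ t₁ t₂ x₁ x₂ v w) =
      (∮ w in C((0 : ℂ), rw), K1Int M n₁ n₂ t₁ t₂ x₁ x₂ v w) +
        (∮ w in C(-v, rw), K1Int M n₁ n₂ t₁ t₂ x₁ x₂ v w) +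
        2 * (π : ℂ) * I * (CC M n₂ t₂ x₂ v * NN M n₁ t₁ x₁ (v + 1)) := by
  obtain ⟨hv0, hv1, hb1, hb2, hb3⟩ := norm_facts hrw hrwv hrv hv
  have hrv0 : 0 < rv := hrw.trans hrwv
  set N := NN M n₁ t₁ x₁ with hN
  set Cv := CC M n₂ t₂ x₂ v with hCv
  have hNd : DifferentiableOn ℂ N {(0 : ℂ)}ᶜ := NN_diff M n₁ t₁ x₁ hMn₁
  -- pointwise facts on the three spheres
  have hS2 : ∀ w ∈ sphere (0 : ℂ) 2, w ≠ 0 ∧ w + v ≠ 0 ∧ w - v - 1 ≠ 0 := by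
    intro w hw
    rw [mem_sphere_zero_iff_norm] at hw
    refine ⟨?_, ?_, ?_⟩
    · intro h; rw [h, norm_zero] at hw; norm_num at hw
    · intro h
      have : w = -v := by linear_combination h
      rw [this, norm_neg, hv] at hw
      linarith
    · intro h
      have : w = v + 1 := by linear_combination h
      rw [this] at hw
      linarith
  have hSr : ∀ w ∈ sphere (0 : ℂ) rw, w ≠ 0 ∧ w + v ≠ 0 ∧ w - v - 1 ≠ 0 := by
    intro w hw
    rw [mem_sphere_zero_iff_norm] at hw
    refine ⟨?_, ?_, ?_⟩
    · intro h; rw [h, norm_zero] at hw; linarith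
    · intro h
      have : w = -v := by linear_combination h
      rw [this, norm_neg, hv] at hw
      linarith
    · intro h
      have : w = v + 1 := by linear_combination h
      rw [this] at hw
      linarith
  have hSv : ∀ w ∈ sphere (-v) rw, w ≠ 0 ∧ w + v ≠ 0 ∧ w - v - 1 ≠ 0 := by
    intro w hw
    rw [mem_sphere_iff_norm] at hw
    have hw' : ‖w + v‖ = rw := by rwa [sub_neg_eq_add] at hw
    refine ⟨?_, ?_, ?_⟩
    · intro h
      rw [h, zero_add, hv] at hw'
      linarith
    · intro h
      rw [h, norm_zero] at hw'
      linarith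
    · intro h
      have hwe : w = v + 1 := by linear_combination h
      rw [hwe] at hw'
      have : v + 1 + v = 1 + 2 * v := by ring
      rw [this] at hw'
      linarith
  -- nonvanishing of the two pole factors on the spheres
  have hp1 : ∀ w : ℂ, w - v - 1 ≠ 0 → w - (v + 1) ≠ 0 := by
    intro w h h'
    exact h (by linear_combination h')
  have hp2 : ∀ w : ℂ, w + v ≠ 0 → w - (-v) ≠ 0 := by
    intro w h h'
    exact h (by linear_combination h')
  -- rewrite the three integrals
  have hsplit : ∀ (c : ℂ) (R : ℝ), 0 ≤ R → (∀ w ∈ sphere c R, w ≠ 0 ∧ w + v ≠ 0 ∧ w - v - 1 ≠ 0) →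
      (∮ w in C(c, R), K1Int M n₁ n₂ t₁ t₂ x₁ x₂ v w) =
        Cv * (∮ w in C(c, R), N w * (w - (v + 1))⁻¹) -
          Cv * (∮ w in C(c, R), N w * (w - (-v))⁻¹) := by
    intro c R hR hS
    have hcont1 : ContinuousOn (fun w => N w * (w - (v + 1))⁻¹) (sphere c R) := by
      refine ContinuousOn.mul (hNd.continuousOn.mono (fun z hz => mem_compl_ne (hS z hz).1)) ?_
      exact ContinuousOn.inv₀ (continuousOn_id.sub continuousOn_const)
        (fun z hz => hp1 z (hS z hz).2.2)
    have hcont2 : ContinuousOn (fun w => N w * (w - (-v))⁻¹) (sphere c R) := by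
      refine ContinuousOn.mul (hNd.continuousOn.mono (fun z hz => mem_compl_ne (hS z hz).1)) ?_
      exact ContinuousOn.inv₀ (continuousOn_id.sub continuousOn_const)
        (fun z hz => hp2 z (hS z hz).2.1)
    have hi1 : CircleIntegrable (fun w => Cv * (N w * (w - (v + 1))⁻¹)) c R :=
      ContinuousOn.circleIntegrable hR (continuousOn_const.mul hcont1)
    have hi2 : CircleIntegrable (fun w => Cv * (N w * (w - (-v))⁻¹)) c R :=
      ContinuousOn.circleIntegrable hR (continuousOn_const.mul hcont2)
    rw [circleIntegral.integral_congr hR (fun z hz =>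
      K1Int_split M n₁ n₂ t₁ t₂ x₁ x₂ v z (hS z hz).1 (hS z hz).2.1 (hS z hz).2.2),
      circleIntegral.integral_sub hi1 hi2, circleIntegral.integral_const_mul,
      circleIntegral.integral_const_mul]
  have e2 := hsplit 0 2 (by norm_num) hS2
  have er := hsplit 0 rw hrw.le hSr
  have ev := hsplit (-v) rw hrw.le hSv
  -- the four basic integrals
  have hA2 : (∮ w in C((0 : ℂ), 2), N w * (w - (v + 1))⁻¹) =
      (∮ w in C((0 : ℂ), rw), N w * (w - (v + 1))⁻¹) + 2 * (π : ℂ) * I * N (v + 1) :=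
    KL hNd hrw (by linarith) (by linarith)
  have hA1 : (∮ w in C((0 : ℂ), 2), N w * (w - (-v))⁻¹) =
      (∮ w in C((0 : ℂ), rw), N w * (w - (-v))⁻¹) + 2 * (π : ℂ) * I * N (-v) := by
    have := KL hNd (u := -v) hrw (by rw [norm_neg, hv]; linarith) (by rw [norm_neg, hv]; linarith)
    exact this
  have hC1 : (∮ w in C(-v, rw), N w * (w - (-v))⁻¹) = 2 * (π : ℂ) * I * N (-v) :=
    KC hNd hrw (by rw [norm_neg, hv]; linarith)
  have hG1 : (∮ w in C(-v, rw), N w * (w - (v + 1))⁻¹) = 0 := by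
    refine KG hNd hrw.le ?_ ?_
    · intro h
      rw [mem_closedBall] at h
      rw [dist_eq_norm] at h
      have : ‖(0 : ℂ) - -v‖ = rv := by rw [zero_sub, neg_neg, hv]
      rw [this] at h
      linarith
    · intro h
      rw [mem_closedBall, dist_eq_norm] at h
      have : v + 1 - -v = 1 + 2 * v := by ring
      rw [this] at h
      linarith
  rw [e2, er, ev, hA2, hA1, hC1, hG1]
  ring

/-! ### Fubini-type lemmas for double circle integrals -/

lemma circle_as_set_integral (f : ℂ → ℂ) (R : ℝ) :
    (∮ w in C((0 : ℂ), R), f w) =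
      ∫ θ in Ioc (0 : ℝ) (2 * π), (circleMap 0 R θ * I) * f (circleMap 0 R θ) := by
  simp only [circleIntegral, deriv_circleMap, smul_eq_mul]
  rw [intervalIntegral.integral_of_le (by positivity)]

lemma double_integrable (g : ℝ → ℝ → ℂ) (hcont : Continuous fun p : ℝ × ℝ => g p.1 p.2) :
    Integrable (Function.uncurry g)
      ((volume.restrict (Ioc (0 : ℝ) (2 * π))).prod (volume.restrict (Ioc (0 : ℝ) (2 * π)))) := by
  rw [Measure.prod_restrict]
  have hc : IsCompact (Icc (0 : ℝ) (2 * π) ×ˢ Icc (0 : ℝ) (2 * π)) :=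
    isCompact_Icc.prod isCompact_Icc
  have : IntegrableOn (Function.uncurry g) (Icc (0 : ℝ) (2 * π) ×ˢ Icc (0 : ℝ) (2 * π)) volume :=
    hcont.continuousOn.integrableOn_compact hc
  exact this.mono_set (Set.prod_mono Ioc_subset_Icc_self Ioc_subset_Icc_self)

lemma double_zero {f : ℂ → ℂ → ℂ} {R1 R2 : ℝ} (hR1 : 0 < R1) (hR2 : 0 < R2)
    (hcont : Continuous fun p : ℝ × ℝ => f (circleMap 0 R1 p.1) (circleMap 0 R2 p.2))
    (hinner : ∀ w ∈ sphere (0 : ℂ) R2, (∮ v in C((0 : ℂ), R1), f v w) = 0) :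
    (∮ v in C((0 : ℂ), R1), ∮ w in C((0 : ℂ), R2), f v w) = 0 := by
  set g : ℝ → ℝ → ℂ := fun θ φ =>
    (circleMap 0 R1 θ * I) * ((circleMap 0 R2 φ * I) *
      f (circleMap 0 R1 θ) (circleMap 0 R2 φ)) with hg
  have hgc : Continuous fun p : ℝ × ℝ => g p.1 p.2 := by
    apply Continuous.mul
    · exact ((continuous_circleMap 0 R1).comp continuous_fst).mul continuous_const
    · exact (((continuous_circleMap 0 R2).comp continuous_snd).mul continuous_const).mul hcont
  have key : (∮ v in C((0 : ℂ), R1), ∮ w in C((0 : ℂ), R2), f v w) =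
      ∫ θ in Ioc (0 : ℝ) (2 * π), ∫ φ in Ioc (0 : ℝ) (2 * π), g θ φ := by
    rw [circle_as_set_integral]
    refine setIntegral_congr_fun measurableSet_Ioc (fun θ _ => ?_)
    rw [circle_as_set_integral, ← MeasureTheory.integral_const_mul]
  rw [key]
  have hint := double_integrable g hgc
  rw [MeasureTheory.integral_integral_swap hint]
  have hzero : ∀ φ : ℝ, (∫ θ in Ioc (0 : ℝ) (2 * π), g θ φ) = 0 := by
    intro φ
    have h1 : (∫ θ in Ioc (0 : ℝ) (2 * π), g θ φ) =
        (circleMap 0 R2 φ * I) * ∫ θ in Ioc (0 : ℝ) (2 * π),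
          (circleMap 0 R1 θ * I) * f (circleMap 0 R1 θ) (circleMap 0 R2 φ) := by
      rw [← MeasureTheory.integral_const_mul]
      refine setIntegral_congr_fun measurableSet_Ioc (fun θ _ => ?_)
      rw [hg]
      ring
    rw [h1, ← circle_as_set_integral (fun z => f z (circleMap 0 R2 φ)) R1,
      hinner (circleMap 0 R2 φ) (circleMap_mem_sphere 0 hR2.le φ), mul_zero]
  calc (∫ φ in Ioc (0 : ℝ) (2 * π), ∫ θ in Ioc (0 : ℝ) (2 * π), g θ φ)
      = ∫ φ in Ioc (0 : ℝ) (2 * π), (0 : ℂ) := by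
        refine setIntegral_congr_fun measurableSet_Ioc (fun φ _ => hzero φ)
    _ = 0 := integral_zero _ _

lemma marginal_ci {f : ℂ → ℂ → ℂ} {R1 R2 : ℝ} (hR1 : 0 < R1) (hR2 : 0 < R2)
    (hcont : Continuous fun p : ℝ × ℝ => f (circleMap 0 R1 p.1) (circleMap 0 R2 p.2)) :
    CircleIntegrable (fun v => ∮ w in C((0 : ℂ), R2), f v w) 0 R1 := by
  have h2π : (0 : ℝ) ≤ 2 * π := by positivity
  set K : ℝ × ℝ → ℂ := fun p =>
    (circleMap 0 R2 p.2 * I) * f (circleMap 0 R1 p.1) (circleMap 0 R2 p.2) with hK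
  have hKc : Continuous K :=
    (((continuous_circleMap 0 R2).comp continuous_snd).mul continuous_const).mul hcont
  have hKint : Integrable K
      ((volume.restrict (Icc (0 : ℝ) (2 * π))).prod (volume.restrict (Ioc (0 : ℝ) (2 * π)))) := by
    rw [Measure.prod_restrict]
    have : IntegrableOn K (Icc (0 : ℝ) (2 * π) ×ˢ Icc (0 : ℝ) (2 * π)) volume :=
      hKc.continuousOn.integrableOn_compact (isCompact_Icc.prod isCompact_Icc)
    exact this.mono_set (Set.prod_mono subset_rfl Ioc_subset_Icc_self)
  have hmarg := hKint.integral_prod_left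
  have heq : (fun θ : ℝ => (∮ w in C((0 : ℂ), R2), f (circleMap 0 R1 θ) w)) =
      fun θ : ℝ => ∫ φ in Ioc (0 : ℝ) (2 * π), K (θ, φ) := by
    funext θ
    rw [circle_as_set_integral]
  show IntervalIntegrable _ volume 0 (2 * π)
  rw [show (fun θ : ℝ => (fun v => ∮ w in C((0 : ℂ), R2), f v w) (circleMap 0 R1 θ)) =
    fun θ : ℝ => ∫ φ in Ioc (0 : ℝ) (2 * π), K (θ, φ) from heq]
  refine IntegrableOn.intervalIntegrable ?_
  rw [uIcc_of_le h2π]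
  exact hmarg

/-! ### Integrability / continuity of the specific integrands -/

lemma norm_circleMap' (R θ : ℝ) : ‖circleMap 0 R θ‖ = |R| := by
  rw [norm_circleMap_zero]

lemma K1Int_ci (M n₁ n₂ : ℕ) (t₁ t₂ : ℝ) (x₁ x₂ : ℤ) (hMn₁ : M ≤ n₁) (v : ℂ) {c : ℂ} {R : ℝ}
    (hR : 0 ≤ R) (hS : ∀ w ∈ sphere c R, w ≠ 0 ∧ w + v ≠ 0 ∧ w - v - 1 ≠ 0) :
    CircleIntegrable (fun w => K1Int M n₁ n₂ t₁ t₂ x₁ x₂ v w) c R := by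
  refine ContinuousOn.circleIntegrable hR ?_
  unfold K1Int
  have hMn : (0 : ℤ) ≤ (n₁ : ℤ) - (M : ℤ) := by
    have := Int.ofNat_le.2 hMn₁
    omega
  refine ContinuousOn.div ?_
    ((continuousOn_id.add continuousOn_const).mul
      ((continuousOn_id.sub continuousOn_const).sub continuousOn_const))
    (fun z hz => mul_ne_zero (hS z hz).2.1 (hS z hz).2.2)
  have Hexp : ContinuousOn (fun w : ℂ => Complex.exp ((t₁ : ℂ) * w)) (sphere c R) :=
    (Complex.continuous_exp.comp (continuous_const.mul continuous_id)).continuousOn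
  have Hinv : ContinuousOn (fun w : ℂ => w⁻¹) (sphere c R) :=
    ContinuousOn.inv₀ continuousOn_id (fun z hz => (hS z hz).1)
  have Hz1 : ContinuousOn (fun w : ℂ => (w * (w - 1)) ^ ((n₁ : ℤ) - (M : ℤ))) (sphere c R) := by
    intro z hz
    exact ((continuousWithinAt_id.mul (continuousWithinAt_id.sub continuousWithinAt_const)).zpow₀
      _ (Or.inr hMn))
  have Hz2 : ContinuousOn (fun w : ℂ => w ^ (-(x₁ + 2 * (n₁ : ℤ) - 2 * (M : ℤ)))) (sphere c R) := by
    intro z hz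
    exact continuousWithinAt_id.zpow₀ _ (Or.inl (hS z hz).1)
  exact ((((((Hinv.mul Hexp).mul Hz1).mul Hz2).mul continuousOn_const).mul
    continuousOn_const).mul continuousOn_const).mul continuousOn_const

lemma BB_contOn (M n₁ n₂ : ℕ) (t₁ t₂ : ℝ) (x₁ x₂ : ℤ) (v : ℂ) {S : Set ℂ}
    (hS : ∀ w ∈ S, w ≠ 0 ∧ w - 1 ≠ 0 ∧ w - (v + 1) ≠ 0 ∧ w - (-v) ≠ 0) :
    ContinuousOn (fun w => BB M n₁ n₂ t₁ t₂ x₁ x₂ v w) S := by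
  unfold BB
  have Hexp : ContinuousOn (fun w : ℂ => Complex.exp ((t₁ : ℂ) * w)) S :=
    (Complex.continuous_exp.comp (continuous_const.mul continuous_id)).continuousOn
  have Hz1 : ContinuousOn
      (fun w : ℂ => w ^ ((n₁ : ℤ) - (n₂ : ℤ) - (x₁ + 2 * (n₁ : ℤ) - 2 * (M : ℤ)) - 1)) S :=
    fun z hz => continuousWithinAt_id.zpow₀ _ (Or.inl (hS z hz).1)
  have Hz2 : ContinuousOn (fun w : ℂ => (w - 1) ^ ((n₁ : ℤ) - (n₂ : ℤ))) S :=
    fun z hz => (continuousWithinAt_id.sub continuousWithinAt_const).zpow₀ _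
      (Or.inl (hS z hz).2.1)
  have Hp : ContinuousOn (fun w : ℂ => (w - (v + 1))⁻¹ - (w - (-v))⁻¹) S := by
    refine ContinuousOn.sub ?_ ?_
    · exact ContinuousOn.inv₀ (continuousOn_id.sub continuousOn_const)
        (fun z hz => (hS z hz).2.2.1)
    · exact ContinuousOn.inv₀ (continuousOn_id.sub continuousOn_const)
        (fun z hz => (hS z hz).2.2.2)
  exact ((((Hexp.mul Hz1).mul Hz2).mul continuousOn_const).mul continuousOn_const).mul Hp

lemma BB_kernel_cont (M n₁ n₂ : ℕ) (t₁ t₂ : ℝ) (x₁ x₂ : ℤ) {rv : ℝ}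
    (h0 : 0 < rv) (h8 : rv < 1 / 8) :
    Continuous fun p : ℝ × ℝ =>
      BB M n₁ n₂ t₁ t₂ x₁ x₂ (circleMap 0 rv p.1) (circleMap 0 2 p.2) := by
  have hvn : ∀ θ : ℝ, ‖circleMap 0 rv θ‖ = rv := by
    intro θ; rw [norm_circleMap', abs_of_pos h0]
  have hwn : ∀ θ : ℝ, ‖circleMap 0 2 θ‖ = 2 := by
    intro θ; rw [norm_circleMap']; norm_num
  have hvc : Continuous fun p : ℝ × ℝ => circleMap 0 rv p.1 :=
    (continuous_circleMap 0 rv).comp continuous_fst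
  have hwc : Continuous fun p : ℝ × ℝ => circleMap 0 2 p.2 :=
    (continuous_circleMap 0 2).comp continuous_snd
  unfold BB
  have hw0 : ∀ p : ℝ × ℝ, circleMap 0 2 p.2 ≠ 0 := by
    intro p h
    have := hwn p.2
    rw [h, norm_zero] at this
    norm_num at this
  have hw1 : ∀ p : ℝ × ℝ, circleMap 0 2 p.2 - 1 ≠ 0 := by
    intro p h
    have h2 := hwn p.2
    have : circleMap 0 2 p.2 = 1 := by linear_combination h
    rw [this, norm_one] at h2
    norm_num at h2
  have h1v : ∀ p : ℝ × ℝ, (1 : ℂ) + circleMap 0 rv p.1 ≠ 0 := by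
    intro p h
    have h2 := hvn p.1
    have : circleMap 0 rv p.1 = -1 := by linear_combination h
    rw [this] at h2
    simp at h2
    linarith
  have hpole1 : ∀ p : ℝ × ℝ, circleMap 0 2 p.2 - (circleMap 0 rv p.1 + 1) ≠ 0 := by
    intro p h
    have hww := hwn p.2
    have : circleMap 0 2 p.2 = circleMap 0 rv p.1 + 1 := by linear_combination h
    rw [this] at hww
    have hb : ‖circleMap 0 rv p.1 + 1‖ ≤ rv + 1 := by
      calc ‖circleMap 0 rv p.1 + 1‖ ≤ ‖circleMap 0 rv p.1‖ + ‖(1 : ℂ)‖ := norm_add_le _ _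
        _ = rv + 1 := by rw [hvn p.1, norm_one]
    linarith
  have hpole2 : ∀ p : ℝ × ℝ, circleMap 0 2 p.2 - (-circleMap 0 rv p.1) ≠ 0 := by
    intro p h
    have hww := hwn p.2
    have : circleMap 0 2 p.2 = -circleMap 0 rv p.1 := by linear_combination h
    rw [this, norm_neg, hvn p.1] at hww
    linarith
  refine Continuous.mul (Continuous.mul (Continuous.mul (Continuous.mul (Continuous.mul
    ?_ ?_) ?_) ?_) ?_) ?_
  · exact Complex.continuous_exp.comp (continuous_const.mul hwc)
  · exact hwc.zpow₀ _ (fun p => Or.inl (hw0 p))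
  · exact (hwc.sub continuous_const).zpow₀ _ (fun p => Or.inl (hw1 p))
  · exact (continuous_const.add hvc).zpow₀ _ (fun p => Or.inl (h1v p))
  · exact Complex.continuous_exp.comp ((continuous_const.mul (hvc.add continuous_const)).neg)
  · refine Continuous.sub ?_ ?_
    · exact (hwc.sub (hvc.add continuous_const)).inv₀ hpole1
    · exact (hwc.sub hvc.neg).inv₀ hpole2

lemma BB_v_zero (M n₁ n₂ : ℕ) (t₁ t₂ : ℝ) (x₁ x₂ : ℤ) {rv : ℝ}
    (h0 : 0 < rv) (h8 : rv < 1 / 8) :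
    ∀ w ∈ sphere (0 : ℂ) 2, (∮ v in C((0 : ℂ), rv), BB M n₁ n₂ t₁ t₂ x₁ x₂ v w) = 0 := by
  intro w hw
  rw [mem_sphere_zero_iff_norm] at hw
  have hfacts : ∀ v : ℂ, ‖v‖ ≤ rv →
      (1 : ℂ) + v ≠ 0 ∧ w - (v + 1) ≠ 0 ∧ w - (-v) ≠ 0 := by
    intro v hv
    refine ⟨?_, ?_, ?_⟩
    · intro h
      have : v = -1 := by linear_combination h
      rw [this] at hv
      simp at hv
      linarith
    · intro h
      have he : w = v + 1 := by linear_combination h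
      have hb : ‖v + 1‖ ≤ rv + 1 := by
        calc ‖v + 1‖ ≤ ‖v‖ + ‖(1 : ℂ)‖ := norm_add_le _ _
          _ ≤ rv + 1 := by rw [norm_one]; linarith
      rw [he] at hw
      linarith
    · intro h
      have he : w = -v := by linear_combination h
      rw [he, norm_neg] at hw
      linarith
  have hdiff : ∀ v : ℂ, ‖v‖ ≤ rv →
      DifferentiableAt ℂ (fun v => BB M n₁ n₂ t₁ t₂ x₁ x₂ v w) v := by
    intro v hv
    obtain ⟨h1, h2, h3⟩ := hfacts v hv
    unfold BB
    refine (((((differentiableAt_const _).mul (differentiableAt_const _)).mul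
      (differentiableAt_const _)).mul ?_).mul ?_).mul ?_
    · exact (differentiableAt_id.const_add 1).zpow (Or.inl h1)
    · exact (((differentiableAt_id.add_const 1).const_mul ((t₂ : ℂ))).neg).cexp
    · exact (((differentiableAt_id.add_const 1).const_sub w).inv h2).sub
        ((differentiableAt_id.neg.const_sub w).inv h3)
  refine Complex.circleIntegral_eq_zero_of_differentiable_on_off_countable h0.le
    Set.countable_empty ?_ ?_
  · intro v hv
    rw [mem_closedBall, dist_zero_right] at hv
    exact (hdiff v hv).continuousAt.continuousWithinAt
  · intro v hv
    have hv' : ‖v‖ ≤ rv := le_of_lt (by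
      have := hv.1
      rwa [mem_ball, dist_zero_right] at this)
    exact hdiff v hv'


end K1Aux
open Metric Set K1Aux

/-- `-𝟙·φ + ∑_{k=M+1}^{n₂} Ψ^{n₁,t₁}_{n₁-k}(x₁) Φ^{n₂,t₂}_{n₂-k}(x₂) = -𝟙·φ̂ + K̂^{(1)}`:
the double contour integral has the `v`-contour enclosing exactly `0` and, for each `v`,
the `w`-contour enclosing exactly `0` and `-v` (in particular not `w = v+1`). -/
theorem K1_double_integral_representation
    (M : ℕ) (hM : 1 ≤ M) (α : ℝ) (hα0 : 0 < α) (hα1 : α < 1)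
    (t₁ t₂ : ℝ) (ht₁ : 0 ≤ t₁) (ht₂ : 0 ≤ t₂)
    (n₁ n₂ : ℕ) (hn₁ : M + 1 ≤ n₁) (hn₂ : M + 1 ≤ n₂) (x₁ x₂ : ℤ)
    (hord : n₂ ≤ n₁ ∨ (n₁ ≤ n₂ ∧ t₂ ≤ t₁)) :
    ∃ ε > 0, ∀ r0 rz rv rw : ℝ,
      0 < r0 → r0 < ε → 0 < rz → rz < ε → 0 < rw → rw < rv → rv < ε →
      (-(if n₁ ≤ n₂ ∧ t₂ ≤ t₁ ∧ ¬(n₁ = n₂ ∧ t₁ = t₂) then (1 : ℂ) else 0) *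
          phi n₁ n₂ t₁ t₂ x₁ x₂ +
        ∑ k ∈ Finset.Icc (M + 1) n₂, Psi M n₁ k t₁ x₁ * Phi M n₂ k t₂ rz x₂) =
      (-(if n₁ ≤ n₂ ∧ t₂ ≤ t₁ ∧ ¬(n₁ = n₂ ∧ t₁ = t₂) then (1 : ℂ) else 0) *
          phiHat n₁ n₂ t₁ t₂ x₁ x₂ r0 +
        (2 * (π : ℂ) * I)⁻¹ * ∮ v in C((0 : ℂ), rv),
          (2 * (π : ℂ) * I)⁻¹ *
            ((∮ w in C((0 : ℂ), rw), K1Int M n₁ n₂ t₁ t₂ x₁ x₂ v w) +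
             (∮ w in C(-v, rw), K1Int M n₁ n₂ t₁ t₂ x₁ x₂ v w))) := by
  refine ⟨1/8, by norm_num, ?_⟩
  intro r0 rz rv rw hr0 hr0e hrz hrze hrw hrwv hrve
  have hrv : 0 < rv := hrw.trans hrwv
  have hπc : (2 * (π : ℂ) * I) ≠ 0 := tpi_ne
  have hMn₁ : M ≤ n₁ := by omega
  set IND : ℂ := (if n₁ ≤ n₂ ∧ t₂ ≤ t₁ ∧ ¬(n₁ = n₂ ∧ t₁ = t₂) then (1 : ℂ) else 0) with hINDdef
  set ψ : ℕ → ℂ → ℂ := fun k w =>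
    w⁻¹ * (w * (w - 1)) ^ ((n₁ : ℤ) - (k : ℤ)) * Complex.exp ((t₁ : ℂ) * w) *
      w ^ (-(x₁ + 2 * (n₁ : ℤ) - 2 * (M : ℤ))) with hψdef
  set φf : ℕ → ℂ → ℂ := fun k v =>
    (1 + 2 * v) * (1 + v) ^ (x₂ + 2 * (n₂ : ℤ) - 2 * (M : ℤ)) *
      Complex.exp (-((t₂ : ℂ) * (v + 1))) * (v * (1 + v)) ^ (-((n₂ : ℤ) - (k : ℤ) + 1)) with hφdef
  have hPsi : ∀ k : ℕ, Psi M n₁ k t₁ x₁ = (2 * (π : ℂ) * I)⁻¹ * ∮ w in C((0:ℂ), 2), ψ k w :=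
    fun k => rfl
  have hPhi : ∀ (k : ℕ) (r : ℝ), Phi M n₂ k t₂ r x₂ =
      (2 * (π : ℂ) * I)⁻¹ * ∮ v in C((0:ℂ), r), φf k v := fun k r => rfl
  -- small-sphere facts
  have hsmall : ∀ (r : ℝ), 0 < r → r < 1/8 → ∀ z ∈ sphere (0:ℂ) r,
      z ≠ 0 ∧ (1:ℂ) + z ≠ 0 := by
    intro r h0 h8 z hz
    rw [mem_sphere_zero_iff_norm] at hz
    constructor
    · intro h; rw [h, norm_zero] at hz; linarith
    · intro h
      have hz1 : z = -1 := by linear_combination h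
      rw [hz1] at hz
      simp at hz
      linarith
  -- differentiability of φf k away from 0 and -1
  have hφdiff : ∀ (k : ℕ) (z : ℂ), z ≠ 0 → (1:ℂ) + z ≠ 0 → DifferentiableAt ℂ (φf k) z := by
    intro k z h0 h1
    rw [hφdef]
    refine (((?_ : DifferentiableAt ℂ (fun v : ℂ => 1 + 2 * v) z).mul ?_).mul ?_).mul ?_
    · exact (differentiableAt_const _).add ((differentiableAt_const _).mul differentiableAt_id)
    · exact (differentiableAt_id.const_add 1).zpow (Or.inl h1)
    · exact (((differentiableAt_id.add_const 1).const_mul ((t₂ : ℂ))).neg).cexp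
    · exact (differentiableAt_id.mul (differentiableAt_id.const_add 1)).zpow
        (Or.inl (mul_ne_zero h0 h1))
  have hφcont : ∀ (k : ℕ) (r : ℝ), 0 < r → r < 1/8 → ContinuousOn (φf k) (sphere (0:ℂ) r) := by
    intro k r h0 h8 z hz
    obtain ⟨hz0, hz1⟩ := hsmall r h0 h8 z hz
    exact (hφdiff k z hz0 hz1).continuousAt.continuousWithinAt
  -- Step 1 : radius change rz → rv in Phi
  have hannφ : ∀ (k : ℕ) (a b : ℝ), 0 < a → a ≤ b → b < 1/8 →
      (∮ v in C((0:ℂ), b), φf k v) = ∮ v in C((0:ℂ), a), φf k v := by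
    intro k a b ha hab hb8
    refine Complex.circleIntegral_eq_of_differentiable_on_annulus_off_countable ha hab
      Set.countable_empty ?_ ?_
    · intro z hz
      have h2 : ‖z‖ ≤ b := by
        have := hz.1; rwa [mem_closedBall, dist_zero_right] at this
      have h1 : a ≤ ‖z‖ := by
        have := hz.2
        simp only [mem_ball, dist_zero_right, not_lt] at this
        exact this
      have hz0 : z ≠ 0 := by intro h; rw [h, norm_zero] at h1; linarith
      have hz1 : (1:ℂ) + z ≠ 0 := by
        intro h
        have hz1' : z = -1 := by linear_combination h
        rw [hz1'] at h2
        simp at h2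
        linarith
      exact (hφdiff k z hz0 hz1).continuousAt.continuousWithinAt
    · intro z hz
      have h2 : ‖z‖ < b := by
        have := hz.1.1; rwa [mem_ball, dist_zero_right] at this
      have h1 : a < ‖z‖ := by
        have := hz.1.2
        simp only [mem_closedBall, dist_zero_right, not_le] at this
        exact this
      have hz0 : z ≠ 0 := by intro h; rw [h, norm_zero] at h1; linarith
      have hz1 : (1:ℂ) + z ≠ 0 := by
        intro h
        have hz1' : z = -1 := by linear_combination h
        rw [hz1'] at h2
        simp at h2
        linarith
      exact hφdiff k z hz0 hz1
  have hPhirad : ∀ k : ℕ, Phi M n₂ k t₂ rz x₂ = Phi M n₂ k t₂ rv x₂ := by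
    intro k
    rw [hPhi k rz, hPhi k rv]
    congr 1
    rcases le_total rz rv with hle | hle
    · exact (hannφ k rz rv hrz hle hrve).symm
    · exact hannφ k rv rz hrv hle hrze
  -- Step 2 : pull the v-integral out of the sum
  have hintk : ∀ k ∈ Finset.Icc (M+1) n₂,
      CircleIntegrable (fun v => Psi M n₁ k t₁ x₁ * φf k v) 0 rv :=
    fun k _ => ContinuousOn.circleIntegrable hrv.le
      (continuousOn_const.mul (hφcont k rv hrv hrve))
  have hSv : (∑ k ∈ Finset.Icc (M+1) n₂, Psi M n₁ k t₁ x₁ * Phi M n₂ k t₂ rv x₂) =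
      (2 * (π : ℂ) * I)⁻¹ * ∮ v in C((0:ℂ), rv),
        ∑ k ∈ Finset.Icc (M+1) n₂, Psi M n₁ k t₁ x₁ * φf k v := by
    rw [integral_finsum _ _ _ _ hintk, Finset.mul_sum]
    refine Finset.sum_congr rfl (fun k _ => ?_)
    rw [hPhi k rv, circleIntegral.integral_const_mul]
    ring
  -- sphere facts on the big circle
  have hw2 : ∀ v : ℂ, ‖v‖ = rv → ∀ w ∈ sphere (0:ℂ) 2,
      w ≠ 0 ∧ w - 1 ≠ 0 ∧ w + v ≠ 0 ∧ w - v - 1 ≠ 0 ∧ w - (v+1) ≠ 0 ∧ w - (-v) ≠ 0 := by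
    intro v hv w hw
    rw [mem_sphere_zero_iff_norm] at hw
    have hA : w ≠ 0 := by intro h; rw [h, norm_zero] at hw; norm_num at hw
    have hB : w - 1 ≠ 0 := by
      intro h
      have : w = 1 := by linear_combination h
      rw [this, norm_one] at hw; norm_num at hw
    have hC : w + v ≠ 0 := by
      intro h
      have : w = -v := by linear_combination h
      rw [this, norm_neg, hv] at hw; linarith
    have hD : w - v - 1 ≠ 0 := by
      intro h
      have he : w = v + 1 := by linear_combination h
      have hb : ‖v + 1‖ ≤ rv + 1 := by
        calc ‖v + 1‖ ≤ ‖v‖ + ‖(1:ℂ)‖ := norm_add_le _ _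
          _ = rv + 1 := by rw [hv, norm_one]
      rw [he] at hw; linarith
    refine ⟨hA, hB, hC, hD, ?_, ?_⟩
    · intro h; exact hD (by linear_combination h)
    · intro h; exact hC (by linear_combination h)
  -- Step 3 : pointwise identity on the v-sphere
  have hFvEq : ∀ v ∈ sphere (0:ℂ) rv,
      (∑ k ∈ Finset.Icc (M+1) n₂, Psi M n₁ k t₁ x₁ * φf k v) =
        (2 * (π : ℂ) * I)⁻¹ *
          ((∮ w in C((0 : ℂ), rw), K1Int M n₁ n₂ t₁ t₂ x₁ x₂ v w) +
            (∮ w in C(-v, rw), K1Int M n₁ n₂ t₁ t₂ x₁ x₂ v w)) +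
          RR n₁ n₂ t₁ t₂ x₁ x₂ v -
          (2 * (π : ℂ) * I)⁻¹ * (∮ w in C((0:ℂ), 2), BB M n₁ n₂ t₁ t₂ x₁ x₂ v w) := by
    intro v hv
    have hvn : ‖v‖ = rv := mem_sphere_zero_iff_norm.1 hv
    obtain ⟨hv0, hv1, _, _, _⟩ := norm_facts hrw hrwv hrve hvn
    -- integrability of each ψ k * φf k v on the big circle
    have hψint : ∀ k ∈ Finset.Icc (M+1) n₂,
        CircleIntegrable (fun w => ψ k w * φf k v) 0 2 := by
      intro k _
      refine ContinuousOn.circleIntegrable (by norm_num) ?_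
      refine ContinuousOn.mul ?_ continuousOn_const
      intro z hz
      obtain ⟨h0, h1, -, -, -, -⟩ := hw2 v hvn z hz
      rw [hψdef]
      refine ((ContinuousWithinAt.mul (ContinuousWithinAt.mul ?_ ?_) ?_).mul ?_)
      · exact continuousWithinAt_id.inv₀ h0
      · exact (continuousWithinAt_id.mul
          (continuousWithinAt_id.sub continuousWithinAt_const)).zpow₀ _
          (Or.inl (mul_ne_zero h0 h1))
      · exact (Complex.continuous_exp.comp (continuous_const.mul continuous_id)).continuousWithinAt
      · exact continuousWithinAt_id.zpow₀ _ (Or.inl h0)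
    -- pull the w-integral out of the sum
    have hA : (∑ k ∈ Finset.Icc (M+1) n₂, Psi M n₁ k t₁ x₁ * φf k v) =
        (2 * (π : ℂ) * I)⁻¹ * ∮ w in C((0:ℂ), 2),
          ∑ k ∈ Finset.Icc (M+1) n₂, ψ k w * φf k v := by
      rw [integral_finsum _ _ _ _ hψint, Finset.mul_sum]
      refine Finset.sum_congr rfl (fun k _ => ?_)
      rw [hPsi k]
      have := circleIntegral.integral_smul_const (ψ k) (φf k v) 0 (2:ℝ)
      simp only [smul_eq_mul] at this
      rw [this]
      ring
    -- identify the sum with K1Int - BB on the big circle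
    have hB : (∮ w in C((0:ℂ), 2), ∑ k ∈ Finset.Icc (M+1) n₂, ψ k w * φf k v) =
        ∮ w in C((0:ℂ), 2), (K1Int M n₁ n₂ t₁ t₂ x₁ x₂ v w - BB M n₁ n₂ t₁ t₂ x₁ x₂ v w) := by
      refine circleIntegral.integral_congr (by norm_num) (fun w hw => ?_)
      obtain ⟨h0, h1, h2, h3, -, -⟩ := hw2 v hvn w hw
      exact sumPsiPhi M n₁ n₂ t₁ t₂ x₁ x₂ hn₂ v w hv0 hv1 h0 h1 h2 h3
    have hK1i : CircleIntegrable (fun w => K1Int M n₁ n₂ t₁ t₂ x₁ x₂ v w) 0 2 :=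
      K1Int_ci M n₁ n₂ t₁ t₂ x₁ x₂ hMn₁ v (by norm_num)
        (fun w hw => ⟨(hw2 v hvn w hw).1, (hw2 v hvn w hw).2.2.1, (hw2 v hvn w hw).2.2.2.1⟩)
    have hBBi : CircleIntegrable (fun w => BB M n₁ n₂ t₁ t₂ x₁ x₂ v w) 0 2 :=
      ContinuousOn.circleIntegrable (by norm_num)
        (BB_contOn M n₁ n₂ t₁ t₂ x₁ x₂ v (fun w hw =>
          ⟨(hw2 v hvn w hw).1, (hw2 v hvn w hw).2.1, (hw2 v hvn w hw).2.2.2.2.1,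
            (hw2 v hvn w hw).2.2.2.2.2⟩))
    have hC : (∮ w in C((0:ℂ), 2),
        (K1Int M n₁ n₂ t₁ t₂ x₁ x₂ v w - BB M n₁ n₂ t₁ t₂ x₁ x₂ v w)) =
        (∮ w in C((0:ℂ), 2), K1Int M n₁ n₂ t₁ t₂ x₁ x₂ v w) -
          ∮ w in C((0:ℂ), 2), BB M n₁ n₂ t₁ t₂ x₁ x₂ v w :=
      circleIntegral.integral_sub hK1i hBBi
    have hW := Wsplit M n₁ n₂ t₁ t₂ x₁ x₂ hMn₁ hrw hrwv hrve v hvn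
    rw [hA, hB, hC, hW, ← CCNN_eq_RR M n₁ n₂ t₁ t₂ x₁ x₂ v hv0 hv1]
    have hcc : (2 * (π : ℂ) * I)⁻¹ * (2 * (π : ℂ) * I) = 1 := inv_mul_cancel₀ hπc
    linear_combination (CC M n₂ t₂ x₂ v * NN M n₁ t₁ x₁ (v + 1)) * hcc
  -- Step 4 : integrate over v and split
  have hFv_int : CircleIntegrable
      (fun v => ∑ k ∈ Finset.Icc (M+1) n₂, Psi M n₁ k t₁ x₁ * φf k v) 0 rv := by
    refine ContinuousOn.circleIntegrable hrv.le ?_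
    refine continuousOn_finset_sum _ (fun k _ => ?_)
    exact continuousOn_const.mul (hφcont k rv hrv hrve)
  have hRR_int : CircleIntegrable (RR n₁ n₂ t₁ t₂ x₁ x₂) 0 rv := by
    refine ContinuousOn.circleIntegrable hrv.le ?_
    intro z hz
    obtain ⟨hz0, hz1⟩ := hsmall rv hrv hrve z hz
    unfold RR
    refine (ContinuousWithinAt.mul (ContinuousWithinAt.mul ?_ ?_) ?_)
    · exact (Complex.continuous_exp.comp
        (continuous_const.mul (continuous_const.add continuous_id))).continuousWithinAt
    · exact (continuousWithinAt_const.add continuousWithinAt_id).zpow₀ _ (Or.inl hz1)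
    · exact continuousWithinAt_id.zpow₀ _ (Or.inl hz0)
  have hβ_int : CircleIntegrable
      (fun v => (2 * (π : ℂ) * I)⁻¹ * (∮ w in C((0:ℂ), 2), BB M n₁ n₂ t₁ t₂ x₁ x₂ v w)) 0 rv := by
    have hm := marginal_ci (f := fun v w => BB M n₁ n₂ t₁ t₂ x₁ x₂ v w) hrv (by norm_num)
      (BB_kernel_cont M n₁ n₂ t₁ t₂ x₁ x₂ hrv hrve)
    exact hm.const_mul _
  have hIW_int : CircleIntegrable (fun v => (2 * (π : ℂ) * I)⁻¹ *
      ((∮ w in C((0 : ℂ), rw), K1Int M n₁ n₂ t₁ t₂ x₁ x₂ v w) +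
        (∮ w in C(-v, rw), K1Int M n₁ n₂ t₁ t₂ x₁ x₂ v w))) 0 rv := by
    refine ci_congr hrv.le (fun v hv => ?_) (?_ :
      CircleIntegrable (fun v =>
        (∑ k ∈ Finset.Icc (M+1) n₂, Psi M n₁ k t₁ x₁ * φf k v) -
          RR n₁ n₂ t₁ t₂ x₁ x₂ v +
          (2 * (π : ℂ) * I)⁻¹ * (∮ w in C((0:ℂ), 2), BB M n₁ n₂ t₁ t₂ x₁ x₂ v w)) 0 rv)
    · have := hFvEq v hv
      linear_combination this
    · exact (hFv_int.sub hRR_int).add hβ_int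
  have hsplit_v : (∮ v in C((0:ℂ), rv),
      ∑ k ∈ Finset.Icc (M+1) n₂, Psi M n₁ k t₁ x₁ * φf k v) =
      (∮ v in C((0:ℂ), rv), (2 * (π : ℂ) * I)⁻¹ *
        ((∮ w in C((0 : ℂ), rw), K1Int M n₁ n₂ t₁ t₂ x₁ x₂ v w) +
          (∮ w in C(-v, rw), K1Int M n₁ n₂ t₁ t₂ x₁ x₂ v w))) +
      (∮ v in C((0:ℂ), rv), RR n₁ n₂ t₁ t₂ x₁ x₂ v) -
      ∮ v in C((0:ℂ), rv),
        (2 * (π : ℂ) * I)⁻¹ * (∮ w in C((0:ℂ), 2), BB M n₁ n₂ t₁ t₂ x₁ x₂ v w) := by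
    have hsum_int : CircleIntegrable (fun v => (2 * (π : ℂ) * I)⁻¹ *
        ((∮ w in C((0 : ℂ), rw), K1Int M n₁ n₂ t₁ t₂ x₁ x₂ v w) +
          (∮ w in C(-v, rw), K1Int M n₁ n₂ t₁ t₂ x₁ x₂ v w)) +
        RR n₁ n₂ t₁ t₂ x₁ x₂ v) 0 rv := hIW_int.add hRR_int
    rw [circleIntegral.integral_congr hrv.le (fun v hv => hFvEq v hv)]
    rw [circleIntegral.integral_sub hsum_int hβ_int,
      integral_add' hIW_int hRR_int]
  -- the BB double integral vanishes
  have hβ0 : (∮ v in C((0:ℂ), rv),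
      (2 * (π : ℂ) * I)⁻¹ * (∮ w in C((0:ℂ), 2), BB M n₁ n₂ t₁ t₂ x₁ x₂ v w)) = 0 := by
    rw [circleIntegral.integral_const_mul,
      double_zero hrv (by norm_num) (BB_kernel_cont M n₁ n₂ t₁ t₂ x₁ x₂ hrv hrve)
        (BB_v_zero M n₁ n₂ t₁ t₂ x₁ x₂ hrv hrve), mul_zero]
  -- Step 5 : the residue term gives 𝟙 (φ - φ̂)
  have hphiFF : phi n₁ n₂ t₁ t₂ x₁ x₂ =
      (2 * (π : ℂ) * I)⁻¹ * ∮ w in C((0:ℂ), 2), FF n₁ n₂ t₁ t₂ x₁ x₂ w := by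
    unfold phi
    congr 1
    refine circleIntegral.integral_congr (by norm_num) (fun w hw => ?_)
    rw [mem_sphere_zero_iff_norm] at hw
    have h0 : w ≠ 0 := by intro h; rw [h, norm_zero] at hw; norm_num at hw
    exact phi_int_eq_FF n₁ n₂ t₁ t₂ x₁ x₂ w h0
  have hphiHatFF : phiHat n₁ n₂ t₁ t₂ x₁ x₂ r0 =
      (2 * (π : ℂ) * I)⁻¹ * ∮ w in C((0:ℂ), r0), FF n₁ n₂ t₁ t₂ x₁ x₂ w := by
    unfold phiHat
    congr 1
    refine circleIntegral.integral_congr hr0.le (fun w hw => ?_)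
    rw [mem_sphere_zero_iff_norm] at hw
    have h0 : w ≠ 0 := by intro h; rw [h, norm_zero] at hw; linarith
    exact phiHat_int_eq_FF n₁ n₂ t₁ t₂ x₁ x₂ w h0
  have hRES : (2 * (π : ℂ) * I)⁻¹ * (∮ v in C((0:ℂ), rv), RR n₁ n₂ t₁ t₂ x₁ x₂ v) =
      IND * (phi n₁ n₂ t₁ t₂ x₁ x₂ - phiHat n₁ n₂ t₁ t₂ x₁ x₂ r0) := by
    rcases le_or_gt n₂ n₁ with hcase | hcase
    · -- no pole at v = 0 : the integral vanishes
      have hexp : (0:ℤ) ≤ (n₁ : ℤ) - (n₂ : ℤ) := by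
        have := Int.ofNat_le.2 hcase; omega
      have hRR0 : (∮ v in C((0:ℂ), rv), RR n₁ n₂ t₁ t₂ x₁ x₂ v) = 0 := by
        have hdiff : ∀ z : ℂ, ‖z‖ ≤ rv → DifferentiableAt ℂ (RR n₁ n₂ t₁ t₂ x₁ x₂) z := by
          intro z hzn
          have hz1 : (1:ℂ) + z ≠ 0 := by
            intro h
            have hz1' : z = -1 := by linear_combination h
            rw [hz1'] at hzn
            simp at hzn
            linarith
          unfold RR
          refine (DifferentiableAt.mul (DifferentiableAt.mul ?_ ?_) ?_)
          · exact ((differentiableAt_id.const_add 1).const_mul _).cexp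
          · exact (differentiableAt_id.const_add 1).zpow (Or.inl hz1)
          · exact differentiableAt_zpow.2 (Or.inr hexp)
        refine Complex.circleIntegral_eq_zero_of_differentiable_on_off_countable hrv.le
          Set.countable_empty ?_ ?_
        · intro z hz
          rw [mem_closedBall, dist_zero_right] at hz
          exact (hdiff z hz).continuousAt.continuousWithinAt
        · intro z hz
          have := hz.1
          rw [mem_ball, dist_zero_right] at this
          exact hdiff z this.le
      rw [hRR0, mul_zero]
      rw [hINDdef]
      by_cases hif : n₁ ≤ n₂ ∧ t₂ ≤ t₁ ∧ ¬(n₁ = n₂ ∧ t₁ = t₂)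
      · rw [if_pos hif]
        have heq : n₁ = n₂ := le_antisymm hif.1 hcase
        have hphiphiHat : phi n₁ n₂ t₁ t₂ x₁ x₂ = phiHat n₁ n₂ t₁ t₂ x₁ x₂ r0 := by
          rw [hphiFF, hphiHatFF]
          congr 1
          refine Complex.circleIntegral_eq_of_differentiable_on_annulus_off_countable hr0
            (by linarith) Set.countable_empty ?_ ?_
          · refine ((NE_diff (t₁ - t₂) _ _ hexp).continuousOn.mono ?_)
            intro z hz
            refine mem_compl_ne (fun h => ?_)
            exact hz.2 (h ▸ mem_ball_self hr0)
          · intro z hz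
            have hz0 : z ≠ 0 := fun h => hz.1.2 (h ▸ mem_closedBall_self hr0.le)
            exact (NE_diff (t₁ - t₂) _ _ hexp).differentiableAt
              (isOpen_compl_singleton.mem_nhds (mem_compl_ne hz0))
        rw [hphiphiHat]
        ring
      · rw [if_neg hif]
        ring
    · -- pole at v = 0 : residue gives φ - φ̂
      have hIND1 : IND = 1 := by
        rw [hINDdef, if_pos]
        refine ⟨by omega, ?_, by omega⟩
        rcases hord with h | h
        · omega
        · exact h.2
      set B : ℕ := n₂ - n₁ with hBdef
      have hcast : (n₁ : ℤ) - (n₂ : ℤ) = -(B : ℤ) := by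
        rw [hBdef]; push_cast; omega
      set g : ℂ → ℂ := fun w => Complex.exp (((t₁ - t₂ : ℝ) : ℂ) * w) *
        w ^ (-(x₁ + (n₁ : ℤ) - x₂ - (n₂ : ℤ)) - 1) * (w - 1) ^ (0 : ℤ) with hgdef
    -- FF as g * (w-1)^{-B}
      have hFFg : FF n₁ n₂ t₁ t₂ x₁ x₂ = fun w => g w * (w - 1) ^ (-(B : ℤ)) := by
        funext w
        rw [hgdef]
        unfold FF
        rw [hcast]
        simp only [zpow_zero, mul_one]
      have hgd : DifferentiableOn ℂ g {(0:ℂ)}ᶜ := NE_diff (t₁ - t₂) _ _ le_rfl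
      have htp := twoPole B g hgd hr0 (by linarith) hrv (by linarith)
      have htrans : (∮ w in C((1:ℂ), rv), FF n₁ n₂ t₁ t₂ x₁ x₂ w) =
          ∮ v in C((0:ℂ), rv), RR n₁ n₂ t₁ t₂ x₁ x₂ v := by
        rw [translate (FF n₁ n₂ t₁ t₂ x₁ x₂) 1 rv]
        refine circleIntegral.integral_congr hrv.le (fun z _ => ?_)
        exact (RR_eq_FF n₁ n₂ t₁ t₂ x₁ x₂ z).symm
      have hFFsplit : (∮ w in C((0:ℂ), 2), FF n₁ n₂ t₁ t₂ x₁ x₂ w) =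
          (∮ w in C((0:ℂ), r0), FF n₁ n₂ t₁ t₂ x₁ x₂ w) +
            ∮ w in C((1:ℂ), rv), FF n₁ n₂ t₁ t₂ x₁ x₂ w := by
        rw [hFFg]
        exact htp
      rw [hIND1, hphiFF, hphiHatFF, ← htrans, one_mul]
      rw [hFFsplit]
      ring
  -- Final assembly
  have hsum_rz : (∑ k ∈ Finset.Icc (M+1) n₂, Psi M n₁ k t₁ x₁ * Phi M n₂ k t₂ rz x₂) =
      ∑ k ∈ Finset.Icc (M+1) n₂, Psi M n₁ k t₁ x₁ * Phi M n₂ k t₂ rv x₂ :=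
    Finset.sum_congr rfl (fun k _ => by rw [hPhirad k])
  rw [hsum_rz, hSv, hsplit_v, hβ0]
  linear_combination hRES
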